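/- If G is a partial cube with minimum degree δ and C is a set of at most ⌈δ/2⌉ − 1 vertices of G, then C is not a dominating set of G. -/

import Mathlib

open SimpleGraph

/-- The `n`-dimensional hypercube: vertices are binary strings of length `n`,
adjacent iff they differ in exactly one bit (Hamming distance 1). -/
def Qcube (n : ℕ) : SimpleGraph (Fin n → Bool) where
  Adj x y := hammingDist x y = 1
  symm := ⟨fun x y h => by show hammingDist y x = 1; rwa [hammingDist_comm]⟩
  loopless := ⟨fun x h => by simp [hammingDist_self] at h⟩

namespace PCaux

variable {n : ℕ}

/-- The set of coordinates where two binary strings differ. -/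
def D (x y : Fin n → Bool) : Finset (Fin n) := Finset.univ.filter fun i => x i ≠ y i

lemma mem_D {x y : Fin n → Bool} {i : Fin n} : i ∈ D x y ↔ x i ≠ y i := by
  simp [D]

lemma hamming_eq_card_D (x y : Fin n → Bool) : hammingDist x y = (D x y).card := rfl

lemma D_inj {v w₁ w₂ : Fin n → Bool} (h : D w₁ v = D w₂ v) : w₁ = w₂ := by
  funext i
  by_cases hi : i ∈ D w₁ v
  · have h1 := mem_D.mp hi
    have h2 := mem_D.mp (h ▸ hi)
    revert h1 h2
    cases w₁ i <;> cases w₂ i <;> cases v i <;> simp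
  · have hi' : i ∉ D w₂ v := h ▸ hi
    have h1 : ¬ (w₁ i ≠ v i) := fun hh => hi (mem_D.mpr hh)
    have h2 : ¬ (w₂ i ≠ v i) := fun hh => hi' (mem_D.mpr hh)
    push_neg at h1 h2
    rw [h1, h2]

lemma D_self (v : Fin n → Bool) : D v v = ∅ := by
  ext i; simp [mem_D]

lemma D_comm (x y : Fin n → Bool) : D x y = D y x := by
  ext i; simp [mem_D, ne_comm]

lemma cover {c v w : Fin n → Bool} : D c v ⊆ D w v ∪ D w c := by
  intro i hi
  have h0 := mem_D.mp hi
  simp only [Finset.mem_union, mem_D]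
  revert h0
  cases w i <;> cases c i <;> cases v i <;> simp

lemma subset_T {c v w : Fin n → Bool} (h1 : (D w v).card ≤ 1) (h2 : (D w c).card ≤ 1)
    (hcv : c ≠ v) : D w v ⊆ D c v := by
  intro i hi
  by_contra hiT
  have hic : i ∈ D w c := by
    have hwv := mem_D.mp hi
    have hcv' : ¬ (c i ≠ v i) := fun hh => hiT (mem_D.mpr hh)
    push_neg at hcv'
    exact mem_D.mpr (by rw [hcv']; exact hwv)
  obtain ⟨j, hj⟩ : (D c v).Nonempty := by
    rw [Finset.nonempty_iff_ne_empty]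
    intro hemp
    exact hcv (D_inj (v := v) (by rw [hemp, D_self]))
  have hji : j ≠ i := fun e => hiT (e ▸ hj)
  rcases Finset.mem_union.mp (cover hj) with hjs | hjs
  · exact hji (Finset.card_le_one.mp h1 j hjs i hi)
  · exact hji (Finset.card_le_one.mp h2 j hjs i hic)

lemma three {c v w₁ w₂ w₃ : Fin n → Bool} (hcv : c ≠ v)
    (h1v : hammingDist w₁ v ≤ 1) (h1c : hammingDist w₁ c ≤ 1)
    (h2v : hammingDist w₂ v ≤ 1) (h2c : hammingDist w₂ c ≤ 1)
    (h3v : hammingDist w₃ v ≤ 1) (h3c : hammingDist w₃ c ≤ 1) :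
    w₁ = w₂ ∨ w₁ = w₃ ∨ w₂ = w₃ := by
  rw [hamming_eq_card_D] at h1v h1c h2v h2c h3v h3c
  have hs1 := subset_T h1v h1c hcv
  have hs2 := subset_T h2v h2c hcv
  have hs3 := subset_T h3v h3c hcv
  have hTpos : 0 < (D c v).card := by
    apply Finset.card_pos.mpr
    rw [Finset.nonempty_iff_ne_empty]
    intro hemp
    exact hcv (D_inj (v := v) (by rw [hemp, D_self]))
  have hTle : (D c v).card ≤ 2 := by
    calc (D c v).card ≤ (D w₁ v ∪ D w₁ c).card := Finset.card_le_card cover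
      _ ≤ (D w₁ v).card + (D w₁ c).card := Finset.card_union_le _ _
      _ ≤ 2 := by omega
  have hkey : D w₁ v = D w₂ v ∨ D w₁ v = D w₃ v ∨ D w₂ v = D w₃ v := by
    interval_cases h : (D c v).card
    · -- card = 1
      obtain ⟨t, ht⟩ := Finset.card_eq_one.mp h
      rw [ht] at hs1 hs2 hs3
      have e1 := Finset.subset_singleton_iff.mp hs1
      have e2 := Finset.subset_singleton_iff.mp hs2
      have e3 := Finset.subset_singleton_iff.mp hs3
      rcases e1 with e1 | e1 <;> rcases e2 with e2 | e2 <;> rcases e3 with e3 | e3 <;>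
        simp [e1, e2, e3]
    · -- card = 2
      have hne : ∀ w : Fin n → Bool, (D w v).card ≤ 1 → (D w c).card ≤ 1 →
          (D w v).Nonempty := by
        intro w hwv hwc
        rw [Finset.nonempty_iff_ne_empty]
        intro hemp
        have hwv' : w = v := D_inj (v := v) (by rw [hemp, D_self])
        rw [hwv', D_comm] at hwc
        omega
      obtain ⟨a1, ha1⟩ := Finset.card_eq_one.mp (le_antisymm h1v (Finset.card_pos.mpr (hne _ h1v h1c)))
      obtain ⟨a2, ha2⟩ := Finset.card_eq_one.mp (le_antisymm h2v (Finset.card_pos.mpr (hne _ h2v h2c)))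
      obtain ⟨a3, ha3⟩ := Finset.card_eq_one.mp (le_antisymm h3v (Finset.card_pos.mpr (hne _ h3v h3c)))
      obtain ⟨a, b, hab, hT⟩ := Finset.card_eq_two.mp h
      rw [ha1, hT] at hs1; rw [ha2, hT] at hs2; rw [ha3, hT] at hs3
      have m1 : a1 = a ∨ a1 = b := by simpa using hs1 (Finset.mem_singleton_self a1)
      have m2 : a2 = a ∨ a2 = b := by simpa using hs2 (Finset.mem_singleton_self a2)
      have m3 : a3 = a ∨ a3 = b := by simpa using hs3 (Finset.mem_singleton_self a3)
      rw [ha1, ha2, ha3]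
      rcases m1 with m1 | m1 <;> rcases m2 with m2 | m2 <;> rcases m3 with m3 | m3 <;>
        simp [m1, m2, m3]
  rcases hkey with h | h | h
  · exact Or.inl (D_inj h)
  · exact Or.inr (Or.inl (D_inj h))
  · exact Or.inr (Or.inr (D_inj h))

end PCaux

/-- If `G` is a partial cube with minimum degree `δ` and `C` is a set of at most
`⌈δ/2⌉ - 1` vertices, then `C` is not a dominating set of `G`. -/
theorem stmt4 (n : ℕ) (S : Set (Fin n → Bool)) [Fintype ↥S]
    [DecidableRel ((Qcube n).induce S).Adj]
    (hconn : ((Qcube n).induce S).Connected)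
    (hiso : ∀ u v : ↥S, ((Qcube n).induce S).dist u v = (Qcube n).dist u.val v.val)
    (C : Set ↥S)
    (hC : C.ncard ≤ (((Qcube n).induce S).minDegree + 1) / 2 - 1) :
    ¬(∀ v : ↥S, v ∈ C ∨ ∃ u ∈ C, ((Qcube n).induce S).Adj u v) := by
  intro h
  obtain ⟨δ, hδ⟩ : ∃ d, ((Qcube n).induce S).minDegree = d := ⟨_, rfl⟩
  rw [hδ] at hC
  have hne : Nonempty ↥S := hconn.nonempty
  obtain ⟨v₀⟩ := hne
  have hcard : δ + 1 ≤ Fintype.card ↥S := by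
    have h1 := ((Qcube n).induce S).minDegree_le_degree v₀
    have h2 := ((Qcube n).induce S).degree_lt_card_verts v₀
    rw [hδ] at h1
    omega
  -- find a vertex not in C
  have hCsmall : C.ncard < Fintype.card ↥S := by
    have : (δ + 1) / 2 ≤ δ + 1 := Nat.div_le_self _ _
    omega
  obtain ⟨v, hv⟩ : ∃ v : ↥S, v ∉ C := by
    by_contra hall
    push_neg at hall
    have : C = Set.univ := Set.eq_univ_of_forall hall
    rw [this, Set.ncard_univ, Nat.card_eq_fintype_card] at hCsmall
    omega
  -- choose dominators
  have hdom : ∀ w : ↥S, ∃ c : ↥S, c ∈ C ∧ hammingDist c.val w.val ≤ 1 := by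
    intro w
    rcases h w with hw | ⟨u, hu, hadj⟩
    · exact ⟨w, hw, by simp [hammingDist_self]⟩
    · exact ⟨u, hu, le_of_eq hadj⟩
  choose f hfC hfd using hdom
  -- the closed neighborhood of v
  set N : Finset ↥S := insert v (((Qcube n).induce S).neighborFinset v) with hN
  have hNcard : δ + 1 ≤ N.card := by
    rw [hN, Finset.card_insert_of_notMem (((Qcube n).induce S).notMem_neighborFinset_self v)]
    have h1 := ((Qcube n).induce S).minDegree_le_degree v
    rw [hδ] at h1
    rw [SimpleGraph.card_neighborFinset_eq_degree]
    omega
  have hNd : ∀ w ∈ N, hammingDist w.val v.val ≤ 1 := by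
    intro w hw
    rcases Finset.mem_insert.mp hw with rfl | hw
    · simp [hammingDist_self]
    · have hadj : ((Qcube n).induce S).Adj v w := (((Qcube n).induce S).mem_neighborFinset v w).mp hw
      have : hammingDist v.val w.val = 1 := hadj
      rw [hammingDist_comm] at this
      omega
  -- fibers of f on N have size ≤ 2
  have hfib : ∀ c ∈ N.image f, (N.filter fun w => f w = c).card ≤ 2 := by
    intro c hc
    by_contra hgt
    push_neg at hgt
    obtain ⟨w₁, w₂, w₃, hw1, hw2, hw3, h12, h13, h23⟩ :=
      Finset.two_lt_card_iff.mp hgt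
    obtain ⟨hw1N, hw1f⟩ := Finset.mem_filter.mp hw1
    obtain ⟨hw2N, hw2f⟩ := Finset.mem_filter.mp hw2
    obtain ⟨hw3N, hw3f⟩ := Finset.mem_filter.mp hw3
    have hcC : c ∈ C := hw1f ▸ hfC w₁
    have hcv : c.val ≠ v.val := by
      intro he
      exact hv ((Subtype.ext he : c = v) ▸ hcC)
    have d1c : hammingDist w₁.val c.val ≤ 1 := by
      have := hfd w₁; rw [hw1f] at this; rwa [hammingDist_comm]
    have d2c : hammingDist w₂.val c.val ≤ 1 := by
      have := hfd w₂; rw [hw2f] at this; rwa [hammingDist_comm]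
    have d3c : hammingDist w₃.val c.val ≤ 1 := by
      have := hfd w₃; rw [hw3f] at this; rwa [hammingDist_comm]
    rcases PCaux.three hcv (hNd w₁ hw1N) d1c (hNd w₂ hw2N) d2c (hNd w₃ hw3N) d3c with
      he | he | he
    · exact h12 (Subtype.ext he)
    · exact h13 (Subtype.ext he)
    · exact h23 (Subtype.ext he)
  have hcount : N.card ≤ 2 * (N.image f).card :=
    Finset.card_le_mul_card_image N 2 hfib
  have himg : (N.image f).card ≤ C.ncard := by
    have hfin := C.toFinite
    rw [Set.ncard_eq_toFinset_card C hfin]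
    apply Finset.card_le_card
    intro c hc
    obtain ⟨w, _, rfl⟩ := Finset.mem_image.mp hc
    exact hfin.mem_toFinset.mpr (hfC w)
  have hdiv : (δ + 1) / 2 * 2 ≤ δ + 1 := Nat.div_mul_le_self _ _
  omega
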